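/- Let f: X × X → ℝ₊ have monogenic universal coarse structure E_f, and let d_ε, d_{ε'} be the graph path metrics for two values ε, ε' in the stable range. If there exist constants A, B > 0 and a controlled set E ∈ E_f with f(x,y) ≤ A·e^{−B·d_ε(x,y)} for all (x,y) ∉ E, then there exist constants A', B' > 0 and a controlled set E' ∈ E_f with f(x,y) ≤ A'·e^{−B'·d_{ε'}(x,y)} for all (x,y) ∉ E'. That is, the property of finite length does not depend on the choice of ε in the stable range. -/

import Mathlib

open scoped ENNReal NNReal

structure CoarseStructure (X : Type*) where
  sets : Set (Set (X × X))
  diag_mem : {p : X × X | p.1 = p.2} ∈ sets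
  subset_mem : ∀ E F : Set (X × X), E ∈ sets → F ⊆ E → F ∈ sets
  union_mem : ∀ E F : Set (X × X), E ∈ sets → F ∈ sets → E ∪ F ∈ sets
  inv_mem : ∀ E : Set (X × X), E ∈ sets → {p : X × X | (p.2, p.1) ∈ E} ∈ sets
  comp_mem : ∀ E F : Set (X × X), E ∈ sets → F ∈ sets →
    {p : X × X | ∃ y, (p.1, y) ∈ E ∧ (y, p.2) ∈ F} ∈ sets

def generatedCoarse {X : Type*} (S : Set (Set (X × X))) : Set (Set (X × X)) :=
  {E | ∀ C : CoarseStructure X, S ⊆ C.sets → E ∈ C.sets}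

def univCoarse {X : Type*} (f : X → X → ℝ≥0) : Set (Set (X × X)) :=
  ⋃ (ε : ℝ≥0) (_ : 0 < ε), generatedCoarse {{p : X × X | ε ≤ f p.1 p.2}}

/-- The path (extended) metric of the graph on `X` with edge relation `R`. -/
noncomputable def pathMetric {X : Type*} (R : X → X → Prop) (x y : X) : ℝ≥0∞ :=
  sInf {n : ℝ≥0∞ | ∃ m : ℕ, n = (m : ℝ≥0∞) ∧
    ∃ c : ℕ → X, c 0 = x ∧ c m = y ∧ ∀ i < m, R (c i) (c (i + 1))}


lemma pathMetric_self {X : Type*} (R : X → X → Prop) (x : X) :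
    pathMetric R x x = 0 := by
  refine le_antisymm ?_ zero_le
  have : (0 : ℝ≥0∞) ∈ {n : ℝ≥0∞ | ∃ m : ℕ, n = (m : ℝ≥0∞) ∧
      ∃ c : ℕ → X, c 0 = x ∧ c m = x ∧ ∀ i < m, R (c i) (c (i + 1))} :=
    ⟨0, by simp, fun _ => x, rfl, rfl, by omega⟩
  simpa [pathMetric] using sInf_le this

lemma pathMetric_le_one {X : Type*} {R : X → X → Prop} {x y : X} (h : R x y) :
    pathMetric R x y ≤ 1 := by
  have : (1 : ℝ≥0∞) ∈ {n : ℝ≥0∞ | ∃ m : ℕ, n = (m : ℝ≥0∞) ∧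
      ∃ c : ℕ → X, c 0 = x ∧ c m = y ∧ ∀ i < m, R (c i) (c (i + 1))} := by
    refine ⟨1, by simp, fun i => if i = 0 then x else y, by simp, by simp, ?_⟩
    intro i hi
    interval_cases i
    simpa using h
  simpa [pathMetric] using sInf_le this

lemma pathMetric_spec {X : Type*} (R : X → X → Prop) (x y : X) :
    pathMetric R x y = ⊤ ∨ ∃ m : ℕ, pathMetric R x y = (m : ℝ≥0∞) ∧
      ∃ c : ℕ → X, c 0 = x ∧ c m = y ∧ ∀ i < m, R (c i) (c (i + 1)) := by
  classical
  by_cases hne : ∃ m : ℕ, ∃ c : ℕ → X, c 0 = x ∧ c m = y ∧ ∀ i < m, R (c i) (c (i + 1))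
  · right
    let m₀ := Nat.find hne
    refine ⟨m₀, ?_, Nat.find_spec hne⟩
    refine le_antisymm (sInf_le ⟨m₀, rfl, Nat.find_spec hne⟩) ?_
    refine le_sInf ?_
    rintro a ⟨m, rfl, hc⟩
    exact_mod_cast Nat.find_min' hne hc
  · left
    have : {n : ℝ≥0∞ | ∃ m : ℕ, n = (m : ℝ≥0∞) ∧
        ∃ c : ℕ → X, c 0 = x ∧ c m = y ∧ ∀ i < m, R (c i) (c (i + 1))} = ∅ := by
      ext n
      simp only [Set.mem_setOf_eq, Set.mem_empty_iff_false, iff_false]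
      rintro ⟨m, rfl, hc⟩
      exact hne ⟨m, hc⟩
    simp [pathMetric, this]

lemma pathMetric_le_of_chain {X : Type*} (R : X → X → Prop) {x y : X} {m : ℕ} {c : ℕ → X}
    (h0 : c 0 = x) (hm : c m = y) (hR : ∀ i < m, R (c i) (c (i + 1))) :
    pathMetric R x y ≤ (m : ℝ≥0∞) :=
  sInf_le ⟨m, rfl, c, h0, hm, hR⟩

lemma pathMetric_triangle {X : Type*} (R : X → X → Prop) (x y z : X) :
    pathMetric R x z ≤ pathMetric R x y + pathMetric R y z := by
  rcases pathMetric_spec R x y with h1 | ⟨m, hm, c, hc0, hcm, hcR⟩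
  · simp [h1]
  rcases pathMetric_spec R y z with h2 | ⟨m', hm', c', hc0', hcm', hcR'⟩
  · simp [h2]
  rw [hm, hm']
  set c'' : ℕ → X := fun i => if i < m then c i else c' (i - m) with hc''
  have h0 : c'' 0 = x := by
    by_cases h : 0 < m
    · simp [hc'', h, hc0]
    · have hm0 : m = 0 := by omega
      have hxy : x = y := by rw [← hc0, ← hcm, hm0]
      simp [hc'', hm0, hc0', hxy]
  have hend : c'' (m + m') = z := by
    have : ¬ (m + m' < m) := by omega
    simp [hc'', this, hcm']
  have hedge : ∀ i < m + m', R (c'' i) (c'' (i + 1)) := by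
    intro i hi
    by_cases h : i < m
    · have hci : c'' i = c i := by simp [hc'', h]
      by_cases h' : i + 1 < m
      · have : c'' (i + 1) = c (i + 1) := by simp [hc'', h']
        rw [hci, this]; exact hcR i h
      · have him : i + 1 = m := by omega
        have : c'' (i + 1) = c' (i + 1 - m) := by simp [hc'', h']
        rw [hci, this, him, Nat.sub_self, hc0', ← hcm, ← him]
        exact hcR i h
    · have h1 : ¬ (i + 1 < m) := by omega
      have e1 : c'' i = c' (i - m) := by simp [hc'', h]
      have e2 : c'' (i + 1) = c' (i - m + 1) := by
        simp [hc'', h1]; congr 1; omega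
      rw [e1, e2]
      exact hcR' (i - m) (by omega)
  calc pathMetric R x z ≤ ((m + m' : ℕ) : ℝ≥0∞) := pathMetric_le_of_chain R h0 hend hedge
    _ = (m : ℝ≥0∞) + m' := by push_cast; ring

lemma pathMetric_symm {X : Type*} {R : X → X → Prop} (hsym : ∀ a b, R a b → R b a)
    (x y : X) : pathMetric R x y ≤ pathMetric R y x := by
  rcases pathMetric_spec R y x with h | ⟨m, hm, c, hc0, hcm, hcR⟩
  · simp [h]
  rw [hm]
  refine pathMetric_le_of_chain R (c := fun i => c (m - i)) (by simp [hcm]) (by simp [hc0]) ?_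
  intro i hi
  have hj : m - i = (m - (i + 1)) + 1 := by omega
  have := hcR (m - (i + 1)) (by omega)
  rw [← hj] at this
  exact hsym _ _ this

/-- Finite length (at most exponential decay with respect to the path metric `d_ε` of the graph
`G_{f,ε}`, off a controlled set) is independent of the choice of `ε` in the stable range.
The bound `f(x,y) ≤ A·e^{−B·d_ε(x,y)}` is encoded as `f(x,y) ≤ A·e^{−B·t}` for every real
`t ≤ d_ε(x,y)` (so `d = ∞` forces `f(x,y) = 0`). -/
theorem finite_length_independent_of_eps {X : Type*} (f : X → X → ℝ≥0) (ε ε' : ℝ≥0)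
    (hε : 0 < ε) (hε' : 0 < ε')
    (hstable : univCoarse f = generatedCoarse {{p : X × X | ε ≤ f p.1 p.2}})
    (hstable' : univCoarse f = generatedCoarse {{p : X × X | ε' ≤ f p.1 p.2}})
    (A B : ℝ) (hA : 0 < A) (hB : 0 < B) (E : Set (X × X)) (hE : E ∈ univCoarse f)
    (hbound : ∀ x y : X, (x, y) ∉ E → ∀ t : ℝ,
      ENNReal.ofReal t ≤ pathMetric (fun a b => ε ≤ f a b ∨ ε ≤ f b a) x y →
      (f x y : ℝ) ≤ A * Real.exp (-B * t)) :
    ∃ A' B' : ℝ, 0 < A' ∧ 0 < B' ∧ ∃ E' ∈ univCoarse f, ∀ x y : X, (x, y) ∉ E' → ∀ t : ℝ,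
      ENNReal.ofReal t ≤ pathMetric (fun a b => ε' ≤ f a b ∨ ε' ≤ f b a) x y →
      (f x y : ℝ) ≤ A' * Real.exp (-B' * t) := by
  classical
  set R : X → X → Prop := fun a b => ε ≤ f a b ∨ ε ≤ f b a with hR
  set R' : X → X → Prop := fun a b => ε' ≤ f a b ∨ ε' ≤ f b a with hR'
  have hsym' : ∀ a b, R' a b → R' b a := fun a b h => h.symm
  -- the coarse structure of sets with bounded `R'`-path metric
  set C : CoarseStructure X :=
    { sets := {E | ∃ n : ℕ, ∀ p ∈ E, pathMetric R' p.1 p.2 ≤ (n : ℝ≥0∞)}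
      diag_mem := ⟨0, fun p hp => by
        have : p.1 = p.2 := hp
        rw [this, pathMetric_self]; simp⟩
      subset_mem := fun E F ⟨n, hn⟩ h
 => ⟨n, fun p hp => hn p (h hp)⟩
      union_mem := fun E F ⟨n, hn⟩ ⟨m, hm⟩ => ⟨max n m, fun p hp => by
        rcases hp with hp | hp
        · exact (hn p hp).trans (by exact_mod_cast Nat.cast_le.mpr (le_max_left n m))
        · exact (hm p hp).trans (by exact_mod_cast Nat.cast_le.mpr (le_max_right n m))⟩
      inv_mem := fun E ⟨n, hn⟩ => ⟨n, fun p hp =>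
        (pathMetric_symm hsym' p.1 p.2).trans (hn (p.2, p.1) hp)⟩
      comp_mem := fun E F ⟨n, hn⟩ ⟨m, hm⟩ => ⟨n + m, fun p hp => by
        obtain ⟨y, h1, h2⟩ := hp
        calc pathMetric R' p.1 p.2
            ≤ pathMetric R' p.1 y + pathMetric R' y p.2 := pathMetric_triangle R' _ _ _
          _ ≤ (n : ℝ≥0∞) + m := add_le_add (hn (p.1, y) h1) (hm (y, p.2) h2)
          _ = ((n + m : ℕ) : ℝ≥0∞) := by push_cast; ring⟩ } with hC
  -- the ε-edge set is controlled, hence has bounded `R'`-path metric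
  have hSmem : {p : X × X | ε ≤ f p.1 p.2} ∈ generatedCoarse {{p : X × X | ε' ≤ f p.1 p.2}} := by
    rw [← hstable', hstable]
    intro D hD
    exact hD rfl
  obtain ⟨n, hn⟩ : ∃ n : ℕ, ∀ p ∈ {p : X × X | ε ≤ f p.1 p.2},
      pathMetric R' p.1 p.2 ≤ (n : ℝ≥0∞) := by
    refine hSmem C ?_
    rintro S rfl
    exact ⟨1, fun p hp => by exact_mod_cast pathMetric_le_one (R := R') (Or.inl hp)⟩
  set N : ℕ := n + 1 with hN
  have hnN : (n : ℝ≥0∞) ≤ (N : ℝ≥0∞) := by rw [hN]; exact_mod_cast Nat.le_succ n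
  have hedge : ∀ a b, R a b → pathMetric R' a b ≤ (N : ℝ≥0∞) := by
    intro a b hab
    rcases hab with h | h
    · exact (hn (a, b) h).trans hnN
    · exact ((pathMetric_symm hsym' a b).trans (hn (b, a) h)).trans hnN
  have hscale : ∀ x y : X, pathMetric R' x y ≤ (N : ℝ≥0∞) * pathMetric R x y := by
    intro x y
    rcases pathMetric_spec R x y with h | ⟨m, hm, c, hc0, hcm, hcR⟩
    · rw [h, ENNReal.mul_top (by rw [hN]; exact_mod_cast Nat.succ_ne_zero n)]
      exact le_top
    · rw [hm, ← hc0, ← hcm]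
      clear hm hc0 hcm
      induction m with
      | zero => simp [pathMetric_self]
      | succ k ih =>
        calc pathMetric R' (c 0) (c (k + 1))
            ≤ pathMetric R' (c 0) (c k) + pathMetric R' (c k) (c (k + 1)) :=
              pathMetric_triangle R' _ _ _
          _ ≤ (N : ℝ≥0∞) * k + N :=
              add_le_add (ih (fun i hi => hcR i (by omega))) (hedge _ _ (hcR k (by omega)))
          _ = (N : ℝ≥0∞) * (k + 1 : ℕ) := by push_cast; ring
  have hNR : (0 : ℝ) < (N : ℝ) := by positivity
  refine ⟨A, B / N, hA, by positivity, E, hE, ?_⟩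
  intro x y hxy t ht
  have hd : ENNReal.ofReal (t / N) ≤ pathMetric R x y := by
    have h1 : ENNReal.ofReal t ≤ (N : ℝ≥0∞) * pathMetric R x y := ht.trans (hscale x y)
    rw [ENNReal.ofReal_div_of_pos hNR, ENNReal.ofReal_natCast]
    rw [mul_comm] at h1
    exact ENNReal.div_le_of_le_mul h1
  have := hbound x y hxy (t / N) hd
  calc (f x y : ℝ) ≤ A * Real.exp (-B * (t / N)) := this
    _ = A * Real.exp (-(B / N) * t) := by rw [show -B * (t / N) = -(B / N) * t by ring]
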